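/- A 2-covariant tensor T satisfies T(k₁,k₂) ≥ 0 for all causal future-directed vectors k₁, k₂ if and only if T(X,Y) ≥ 0 for all null future-directed vectors X, Y. -/

import Mathlib

/-- The Minkowski inner product of signature (+,-,...,-) on `Fin (n+1) → ℝ`. -/
def mink (n : ℕ) (v w : Fin (n + 1) → ℝ) : ℝ :=
  v 0 * w 0 - ∑ i : Fin n, v i.succ * w i.succ

/-- Causal future-directed vector. -/
def causalFD (n : ℕ) (v : Fin (n + 1) → ℝ) : Prop :=
  0 ≤ mink n v v ∧ 0 < v 0

/-- Null future-directed vector. -/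
def nullFD (n : ℕ) (v : Fin (n + 1) → ℝ) : Prop :=
  mink n v v = 0 ∧ 0 < v 0

lemma mink_cons (n : ℕ) (a b : ℝ) (w z : Fin n → ℝ) :
    mink n (Fin.cons a w) (Fin.cons b z) = a * b - ∑ i, w i * z i := by
  simp [mink, Fin.cons_zero, Fin.cons_succ]

lemma null_of (n : ℕ) (lam : ℝ) (hlam : 0 < lam) (u : Fin n → ℝ)
    (hu : ∑ i, u i * u i = 1) :
    nullFD n (Fin.cons lam (fun i => lam * u i)) := by
  constructor
  · rw [mink_cons]
    have : ∑ i, (lam * u i) * (lam * u i) = lam * lam * ∑ i, u i * u i := by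
      rw [Finset.mul_sum]; congr 1; funext i; ring
    rw [this, hu]; ring
  · simpa using hlam

lemma decomp (n : ℕ) (hn : 1 ≤ n) (k : Fin (n + 1) → ℝ) (hk : causalFD n k) :
    ∃ X1 X2 : Fin (n + 1) → ℝ,
      nullFD n X1 ∧ (nullFD n X2 ∨ X2 = 0) ∧ k = X1 + X2 := by
  have hnz : NeZero n := ⟨by omega⟩
  set s := Real.sqrt (∑ i : Fin n, (k i.succ) ^ 2) with hs
  have hs0 : 0 ≤ s := Real.sqrt_nonneg _
  have hsum : ∑ i : Fin n, (k i.succ) ^ 2 = s ^ 2 :=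
    (Real.sq_sqrt (by positivity)).symm
  have hk0 : 0 < k 0 := hk.2
  have hmink : 0 ≤ k 0 * k 0 - ∑ i : Fin n, k i.succ * k i.succ := hk.1
  have hsq : ∑ i : Fin n, k i.succ * k i.succ = s ^ 2 := by
    rw [← hsum]; congr 1; funext i; ring
  have hsk : s ≤ k 0 := by nlinarith [hsq, hmink]
  -- the spatial unit direction
  set u : Fin n → ℝ :=
    if 0 < s then fun i => k i.succ / s else fun i => if i = 0 then 1 else 0 with hu_def
  have hu : ∑ i, u i * u i = 1 := by
    by_cases hp : 0 < s
    · simp only [hu_def, if_pos hp]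
      have : ∑ i : Fin n, k i.succ / s * (k i.succ / s)
          = (∑ i : Fin n, k i.succ * k i.succ) / (s * s) := by
        rw [Finset.sum_div]; congr 1; funext i; ring
      rw [this, hsq]
      field_simp
    · simp only [hu_def, if_neg hp]
      rw [Finset.sum_eq_single (0 : Fin n)]
      · simp
      · intro b _ hb; simp [hb]
      · simp
  have hsu : ∀ i, s * u i = k i.succ := by
    intro i
    by_cases hp : 0 < s
    · simp only [hu_def, if_pos hp]
      field_simp
    · have hs0' : s = 0 := le_antisymm (not_lt.mp hp) hs0
      have hzero : ∑ i : Fin n, (k i.succ) ^ 2 = 0 := by rw [hsum, hs0']; ring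
      have hki : (k i.succ) ^ 2 = 0 := by
        have := (Finset.sum_eq_zero_iff_of_nonneg
          (fun j _ => sq_nonneg (k j.succ))).mp hzero i (Finset.mem_univ i)
        exact this
      have : k i.succ = 0 := by nlinarith [hki]
      rw [this, hs0']; ring
  set l1 := (k 0 + s) / 2 with hl1
  set l2 := (k 0 - s) / 2 with hl2
  have hl1pos : 0 < l1 := by positivity
  have hl2nn : 0 ≤ l2 := by simp only [hl2]; linarith
  refine ⟨Fin.cons l1 (fun i => l1 * u i), Fin.cons l2 (fun i => l2 * (-u) i), ?_, ?_, ?_⟩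
  · exact null_of n l1 hl1pos u hu
  · rcases lt_or_eq_of_le hl2nn with h | h
    · left
      exact null_of n l2 h (-u) (by simpa using hu)
    · right
      funext j
      refine Fin.cases ?_ ?_ j
      · simp [← h]
      · intro i; simp [← h]
  · funext j
    refine Fin.cases ?_ ?_ j
    · simp only [Pi.add_apply, Fin.cons_zero, hl1, hl2]; ring
    · intro i
      simp only [Pi.add_apply, Fin.cons_succ, Pi.neg_apply]
      have h12 : l1 - l2 = s := by rw [hl1, hl2]; ring
      have heq : l1 * u i + l2 * (-u i) = (l1 - l2) * u i := by ring
      rw [heq, h12, hsu i]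

lemma causal_of_null (n : ℕ) (v : Fin (n + 1) → ℝ) (h : nullFD n v) : causalFD n v :=
  ⟨le_of_eq h.1.symm, h.2⟩

/-- `T` is nonnegative on all pairs of causal future-directed vectors
    iff it is nonnegative on all pairs of null future-directed vectors. -/
theorem dominant_property_iff_nonneg_on_null (n : ℕ) (hn : 1 ≤ n)
    (T : (Fin (n + 1) → ℝ) →ₗ[ℝ] (Fin (n + 1) → ℝ) →ₗ[ℝ] ℝ) :
    (∀ k₁ k₂, causalFD n k₁ → causalFD n k₂ → 0 ≤ T k₁ k₂) ↔
      (∀ X Y, nullFD n X → nullFD n Y → 0 ≤ T X Y) := by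
  constructor
  · intro h X Y hX hY
    exact h X Y (causal_of_null n X hX) (causal_of_null n Y hY)
  · intro h k₁ k₂ hk₁ hk₂
    obtain ⟨X1, X2, hX1, hX2, hkeq⟩ := decomp n hn k₁ hk₁
    obtain ⟨Y1, Y2, hY1, hY2, hkeq'⟩ := decomp n hn k₂ hk₂
    have key : ∀ X Y : Fin (n + 1) → ℝ, (nullFD n X ∨ X = 0) →
        (nullFD n Y ∨ Y = 0) → 0 ≤ T X Y := by
      rintro X Y (hX | rfl) (hY | rfl)
      · exact h X Y hX hY
      · simp
      · simp
      · simp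
    rw [hkeq, hkeq']
    simp only [map_add, LinearMap.add_apply]
    have h11 := key X1 Y1 (Or.inl hX1) (Or.inl hY1)
    have h12 := key X1 Y2 (Or.inl hX1) hY2
    have h21 := key X2 Y1 hX2 (Or.inl hY1)
    have h22 := key X2 Y2 hX2 hY2
    linarith
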